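/- Under the assumptions of the existence theorem for f, the unique solution f satisfies ∂f/∂y(y,t) ≥ e^{−T R(T)} > 0 for all (y,t) ∈ [0,1] × [0,T], where R(T) is the uniform bound on w and |∂w/∂y| over W and [0,1]×[0,T]. In particular f(·,t) is strictly increasing in y. -/

import Mathlib

open Set MeasureTheory Topology Filter

/-- Clamped version of `f`, continuous on all of `ℝ × ℝ`. -/
noncomputable def fcl (f : ℝ → ℝ → ℝ) (z s : ℝ) : ℝ := f (min (max z 0) 1) (max s 0)

/-- The exponential factor, using the clamped `f`. -/
noncomputable def Eex (u : ℝ → ℝ → ℝ) (f : ℝ → ℝ → ℝ) (z t : ℝ) : ℝ :=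
  Real.exp (-(∫ s in (0:ℝ)..t, u (fcl f z s) s))

/-- The inner integral. -/
noncomputable def Gin (u : ℝ → ℝ → ℝ) (r : ℝ → ℝ) (f : ℝ → ℝ → ℝ) (y t : ℝ) : ℝ :=
  ∫ z in y..(1:ℝ), r z * Eex u f z t

theorem stmt_5 {W : Type*} [MeasurableSpace W] (lam : Measure W)
    [IsProbabilityMeasure lam] (T R : ℝ) (hT : 0 < T)
    (w wy : W → ℝ → ℝ → ℝ)
    (hw_nonneg : ∀ i y t, 0 ≤ w i y t)
    (hw_deriv : ∀ i t y, HasDerivAt (fun y => w i y t) (wy i y t) y)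
    (hw_cont : ∀ i, Continuous fun p : ℝ × ℝ => w i p.1 p.2)
    (hRbd : ∀ i, ∀ y ∈ Icc (0:ℝ) 1, ∀ t ∈ Icc (0:ℝ) T,
      max (w i y t) |wy i y t| ≤ R)
    (ρ ρy : W → ℝ → ℝ)
    (hρ_deriv : ∀ i y, HasDerivAt (ρ i) (ρy i y) y)
    (hρy_cont : ∀ i, Continuous (ρy i))
    (hρy_nonpos : ∀ i, ∀ y ∈ Icc (0:ℝ) 1, ρy i y ≤ 0)
    (hρ0 : ∀ i, ρ i 0 = 1) (hρ1 : ∀ i, ρ i 1 = 0)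
    (hmass : ∀ y ∈ Icc (0:ℝ) 1, ∫ i, ρ i y ∂lam = 1 - y)
    (f fy : ℝ → ℝ → ℝ)
    (hf_cont : ContinuousOn (fun p : ℝ × ℝ => f p.1 p.2) (Icc 0 1 ×ˢ Ici 0))
    (hf_range : ∀ y ∈ Icc (0:ℝ) 1, ∀ t ∈ Ici (0:ℝ), f y t ∈ Icc (0:ℝ) 1)
    (hfy : ∀ t ∈ Icc (0:ℝ) T, ∀ y ∈ Icc (0:ℝ) 1,
      HasDerivAt (fun y => f y t) (fy y t) y)
    (hf_eq : ∀ y ∈ Icc (0:ℝ) 1, ∀ t ∈ Ici (0:ℝ),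
      f y t = 1 + ∫ i, (∫ z in y..(1:ℝ), ρy i z *
        Real.exp (-∫ s in (0:ℝ)..t, w i (f z s) s)) ∂lam) :
    (∀ y ∈ Icc (0:ℝ) 1, ∀ t ∈ Icc (0:ℝ) T, Real.exp (-(T * R)) ≤ fy y t) ∧
    (0 < Real.exp (-(T * R))) ∧
    (∀ t ∈ Icc (0:ℝ) T, StrictMonoOn (fun y => f y t) (Icc 0 1)) := by
  have hT0 : (0:ℝ) ≤ T := hT.le
  set c : ℝ := Real.exp (-(T * R)) with hc
  have hc0 : 0 < c := Real.exp_pos _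
  -- W is nonempty
  have hW : Nonempty W := by
    by_contra h
    rw [not_nonempty_iff] at h
    have h1 : lam univ = 1 := measure_univ
    rw [Set.univ_eq_empty_iff.2 h, measure_empty] at h1
    exact zero_ne_one h1
  obtain ⟨i₀⟩ := hW
  have hR0 : (0:ℝ) ≤ R :=
    le_trans (le_trans (hw_nonneg i₀ 0 0) (le_max_left _ _))
      (hRbd i₀ 0 ⟨le_refl 0, zero_le_one⟩ 0 ⟨le_refl 0, hT0⟩)
  have hc1 : c ≤ 1 := Real.exp_le_one_iff.2 (neg_nonpos.2 (mul_nonneg hT0 hR0))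
  -- clamping facts
  have hclamp_mem : ∀ z : ℝ, min (max z 0) 1 ∈ Icc (0:ℝ) 1 := fun z =>
    ⟨le_min (le_max_right _ _) zero_le_one, min_le_right _ _⟩
  have hclamp : ∀ z ∈ Icc (0:ℝ) 1, min (max z 0) 1 = z := by
    intro z hz
    rw [max_eq_left hz.1, min_eq_left hz.2]
  have hfc_eq : ∀ z ∈ Icc (0:ℝ) 1, ∀ s : ℝ, 0 ≤ s → fcl f z s = f z s := by
    intro z hz s hs
    rw [fcl, hclamp z hz, max_eq_left hs]
  have hfc_cont : Continuous fun p : ℝ × ℝ => fcl f p.1 p.2 := by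
    simp only [fcl]
    exact ContinuousOn.comp_continuous hf_cont
      (show Continuous fun p : ℝ × ℝ => ((min (max p.1 0) 1, max p.2 0) : ℝ × ℝ) by fun_prop)
      (fun p => ⟨hclamp_mem p.1, show (0:ℝ) ≤ max p.2 0 from le_max_right _ _⟩)
  have hfc_range : ∀ z s : ℝ, fcl f z s ∈ Icc (0:ℝ) 1 := fun z s =>
    hf_range _ (hclamp_mem z) _ (show (0:ℝ) ≤ max s 0 from le_max_right _ _)
  -- bounds on the exponential factor
  have hwle : ∀ i (z : ℝ), ∀ s ∈ Icc (0:ℝ) T, w i (fcl f z s) s ≤ R := fun i z s hs =>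
    le_trans (le_max_left _ _) (hRbd i _ (hfc_range z s) s hs)
  have hwint : ∀ i (z a b : ℝ), IntervalIntegrable (fun s => w i (fcl f z s) s) volume a b := by
    intro i z a b
    apply Continuous.intervalIntegrable
    exact (hw_cont i).comp ((hfc_cont.comp (by fun_prop : Continuous fun s : ℝ => ((z, s) : ℝ × ℝ))).prodMk continuous_id)
  have hE_bounds : ∀ i (z : ℝ), ∀ t ∈ Icc (0:ℝ) T, c ≤ Eex (w i) f z t ∧ Eex (w i) f z t ≤ 1 := by
    intro i z t ht
    have hnn : 0 ≤ ∫ s in (0:ℝ)..t, w i (fcl f z s) s :=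
      intervalIntegral.integral_nonneg ht.1 (fun s _ => hw_nonneg _ _ _)
    have hup : (∫ s in (0:ℝ)..t, w i (fcl f z s) s) ≤ T * R := by
      calc (∫ s in (0:ℝ)..t, w i (fcl f z s) s) ≤ ∫ _s in (0:ℝ)..t, R := by
            apply intervalIntegral.integral_mono_on ht.1 (hwint i z 0 t) intervalIntegrable_const
            intro s hs
            exact hwle i z s ⟨hs.1, hs.2.trans ht.2⟩
        _ = t * R := by simp
        _ ≤ T * R := mul_le_mul_of_nonneg_right ht.2 hR0
    constructor
    · rw [hc, Eex]
      exact Real.exp_le_exp.2 (neg_le_neg hup)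
    · rw [Eex]
      exact Real.exp_le_one_iff.2 (neg_nonpos.2 hnn)
  have hE_cont : ∀ i (t : ℝ), Continuous fun z => Eex (w i) f z t := by
    intro i t
    apply Real.continuous_exp.comp
    apply Continuous.neg
    apply intervalIntegral.continuous_parametric_intervalIntegral_of_continuous' (μ := volume)
    show Continuous fun p : ℝ × ℝ => w i (fcl f p.1 p.2) p.2
    exact (hw_cont i).comp (hfc_cont.prodMk continuous_snd)
  -- basic integrability facts
  have hGz_int : ∀ i (t a b : ℝ), IntervalIntegrable (fun z => ρy i z * Eex (w i) f z t) volume a b :=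
    fun i t a b => ((hρy_cont i).mul (hE_cont i t)).intervalIntegrable a b
  have hFTC : ∀ i (a b : ℝ), (∫ z in a..b, ρy i z) = ρ i b - ρ i a := fun i a b =>
    intervalIntegral.integral_eq_sub_of_hasDerivAt (fun z _ => hρ_deriv i z)
      ((hρy_cont i).intervalIntegrable a b)
  -- monotonicity facts for ρ
  have hρ_anti : ∀ i, AntitoneOn (ρ i) (Icc (0:ℝ) 1) := by
    intro i
    apply antitoneOn_of_deriv_nonpos (convex_Icc 0 1)
    · exact (continuous_iff_continuousAt.2 fun y => (hρ_deriv i y).continuousAt).continuousOn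
    · intro x _
      exact (hρ_deriv i x).differentiableAt.differentiableWithinAt
    · intro x hx
      rw [interior_Icc] at hx
      rw [(hρ_deriv i x).deriv]
      exact hρy_nonpos i x ⟨hx.1.le, hx.2.le⟩
  have hρ_mem : ∀ i, ∀ y ∈ Icc (0:ℝ) 1, ρ i y ∈ Icc (0:ℝ) 1 := by
    intro i y hy
    constructor
    · rw [← hρ1 i]
      exact hρ_anti i hy ⟨zero_le_one, le_refl 1⟩ hy.2
    · rw [← hρ0 i]
      exact hρ_anti i ⟨le_refl 0, zero_le_one⟩ hy hy.1
  have hρ_int : ∀ y ∈ Icc (0:ℝ) 1, Integrable (fun i => ρ i y) lam := by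
    intro y hy
    rcases hy.2.lt_or_eq with h1 | h1
    · by_contra hni
      have := hmass y hy
      rw [integral_undef hni] at this
      linarith
    · subst h1
      have : (fun i => ρ i 1) = fun _ => (0:ℝ) := funext fun i => hρ1 i
      rw [this]
      exact integrable_const 0
  -- key pointwise inequality between inner integrals
  have hGdiff : ∀ i, ∀ t ∈ Icc (0:ℝ) T, ∀ y y' : ℝ, 0 ≤ y → y ≤ y' → y' ≤ 1 →
      c * (ρ i y - ρ i y') ≤ Gin (w i) (ρy i) f y' t - Gin (w i) (ρy i) f y t := by
    intro i t ht y y' hy0 hyy' hy'1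
    have hsplit : (∫ z in y..y', ρy i z * Eex (w i) f z t) + Gin (w i) (ρy i) f y' t
        = Gin (w i) (ρy i) f y t :=
      intervalIntegral.integral_add_adjacent_intervals (hGz_int i t y y') (hGz_int i t y' 1)
    have hle : (∫ z in y..y', ρy i z * Eex (w i) f z t) ≤ ∫ z in y..y', ρy i z * c := by
      apply intervalIntegral.integral_mono_on hyy' (hGz_int i t y y')
        (((hρy_cont i).mul continuous_const).intervalIntegrable y y')
      intro z hz
      exact mul_le_mul_of_nonpos_left (hE_bounds i z t ht).1
        (hρy_nonpos i z ⟨hy0.trans hz.1, hz.2.trans hy'1⟩)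
    have hval : (∫ z in y..y', ρy i z * c) = (ρ i y' - ρ i y) * c := by
      rw [intervalIntegral.integral_mul_const, hFTC i y y']
    nlinarith [hle, hval, hsplit]
  -- rewrite the fixed point equation in terms of Gin
  have hf_eq' : ∀ y ∈ Icc (0:ℝ) 1, ∀ t ∈ Icc (0:ℝ) T,
      f y t = 1 + ∫ i, Gin (w i) (ρy i) f y t ∂lam := by
    intro y hy t ht
    rw [hf_eq y hy t ht.1]
    congr 1
    refine integral_congr_ae (Filter.Eventually.of_forall fun i => ?_)
    refine intervalIntegral.integral_congr fun z hz => ?_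
    rw [uIcc_of_le hy.2] at hz
    have hz01 : z ∈ Icc (0:ℝ) 1 := ⟨hy.1.trans hz.1, hz.2⟩
    have heq : (∫ s in (0:ℝ)..t, w i (f z s) s) = ∫ s in (0:ℝ)..t, w i (fcl f z s) s := by
      refine intervalIntegral.integral_congr fun s hs => ?_
      rw [uIcc_of_le ht.1] at hs
      simp only [hfc_eq z hz01 s hs.1]
    simp only [Eex, heq]
  -- value at t = 0
  have h0 : ∀ y ∈ Icc (0:ℝ) 1, f y 0 = y := by
    intro y hy
    rw [hf_eq' y hy 0 ⟨le_refl 0, hT0⟩]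
    have hG0 : (fun i => Gin (w i) (ρy i) f y 0) = fun i => -(ρ i y) := by
      funext i
      have hz : ∀ z : ℝ, ρy i z * Eex (w i) f z 0 = ρy i z := by
        intro z
        rw [Eex, intervalIntegral.integral_same, neg_zero, Real.exp_zero, mul_one]
      have h1 : Gin (w i) (ρy i) f y 0 = ∫ z in y..(1:ℝ), ρy i z :=
        intervalIntegral.integral_congr fun z _ => hz z
      rw [h1, hFTC i y 1, hρ1 i]
      ring
    rw [hG0, integral_neg, hmass y hy]
    ring
  -- value at y = 1
  have hf1 : ∀ t ∈ Icc (0:ℝ) T, f 1 t = 1 := by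
    intro t ht
    rw [hf_eq' 1 ⟨zero_le_one, le_refl 1⟩ t ht]
    have : (fun i => Gin (w i) (ρy i) f 1 t) = fun _ => (0:ℝ) := by
      funext i
      rw [Gin, intervalIntegral.integral_same]
    rw [this, integral_const]
    simp
  -- dichotomy
  have hdich : ∀ t ∈ Icc (0:ℝ) T, ∀ y ∈ Icc (0:ℝ) 1,
      f y t ≤ 1 - c * (1 - y) ∨ f y t = 1 := by
    intro t ht y hy
    by_cases hint : Integrable (fun i => Gin (w i) (ρy i) f y t) lam
    · left
      rw [hf_eq' y hy t ht]
      have hub : ∀ i, Gin (w i) (ρy i) f y t ≤ -(c * ρ i y) := by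
        intro i
        have := hGdiff i t ht y 1 hy.1 hy.2 (le_refl 1)
        have hG1 : Gin (w i) (ρy i) f 1 t = 0 := intervalIntegral.integral_same
        rw [hG1, hρ1 i] at this
        linarith
      have hmono := integral_mono hint (((hρ_int y hy).const_mul c).neg) hub
      have hval : (∫ i, -(c * ρ i y) ∂lam) = -(c * (1 - y)) := by
        rw [integral_neg, integral_const_mul, hmass y hy]
      simp only [Pi.neg_apply] at hmono
      rw [hval] at hmono
      linarith
    · right
      rw [hf_eq' y hy t ht, integral_undef hint]
      ring
  -- upper bound for f via IVT
  have hle : ∀ t ∈ Icc (0:ℝ) T, ∀ y ∈ Icc (0:ℝ) 1, f y t ≤ 1 - c * (1 - y) := by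
    intro t ht y hy
    rcases hy.2.lt_or_eq with hy1 | hy1
    · by_contra hcon
      push_neg at hcon
      have hfy1 : f y t = 1 := (hdich t ht y hy).resolve_left (by linarith)
      have hcy : 0 < c * (1 - y) := mul_pos hc0 (by linarith)
      have hφ : ContinuousOn (fun s => f y s) (Icc 0 t) := by
        apply (hf_cont.comp (Continuous.continuousOn (by fun_prop : Continuous fun s : ℝ => ((y, s) : ℝ × ℝ))) _)
        intro s hs
        exact ⟨hy, hs.1⟩
      have hIVT := intermediate_value_Icc ht.1 hφ
      have hmem : (1 - c * (1 - y) / 2) ∈ Icc (f y 0) (f y t) := by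
        rw [h0 y hy, hfy1]
        constructor
        · nlinarith [hc1]
        · linarith
      obtain ⟨s, hs, hfs⟩ := hIVT hmem
      have hfs' : f y s = 1 - c * (1 - y) / 2 := hfs
      have hsT : s ∈ Icc (0:ℝ) T := ⟨hs.1, hs.2.trans ht.2⟩
      rcases hdich s hsT y hy with h | h
      · rw [hfs'] at h; linarith
      · rw [hfs'] at h; linarith
    · subst hy1
      rw [hf1 t ht]
      simp
  -- integrability of the G family
  have hGint : ∀ t ∈ Icc (0:ℝ) T, ∀ y ∈ Icc (0:ℝ) 1,
      Integrable (fun i => Gin (w i) (ρy i) f y t) lam := by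
    intro t ht y hy
    rcases hy.2.lt_or_eq with hy1 | hy1
    · by_contra hni
      have h1 : f y t = 1 := by
        rw [hf_eq' y hy t ht, integral_undef hni]; ring
      have h2 := hle t ht y hy
      have hcy : 0 < c * (1 - y) := mul_pos hc0 (by linarith)
      linarith
    · subst hy1
      have : (fun i => Gin (w i) (ρy i) f 1 t) = fun _ => (0:ℝ) := by
        funext i
        rw [Gin, intervalIntegral.integral_same]
      rw [this]
      exact integrable_const 0
  -- the main increment inequality
  have hmain : ∀ t ∈ Icc (0:ℝ) T, ∀ y ∈ Icc (0:ℝ) 1, ∀ y' ∈ Icc (0:ℝ) 1, y ≤ y' →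
      c * (y' - y) ≤ f y' t - f y t := by
    intro t ht y hy y' hy' hyy'
    rw [hf_eq' y hy t ht, hf_eq' y' hy' t ht]
    have hsub : (∫ i, Gin (w i) (ρy i) f y' t ∂lam) - (∫ i, Gin (w i) (ρy i) f y t ∂lam)
        = ∫ i, (Gin (w i) (ρy i) f y' t - Gin (w i) (ρy i) f y t) ∂lam :=
      (integral_sub (hGint t ht y' hy') (hGint t ht y hy)).symm
    have hlower : (∫ i, c * (ρ i y - ρ i y') ∂lam)
        ≤ ∫ i, (Gin (w i) (ρy i) f y' t - Gin (w i) (ρy i) f y t) ∂lam := by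
      apply integral_mono (((hρ_int y hy).sub (hρ_int y' hy')).const_mul c)
        ((hGint t ht y' hy').sub (hGint t ht y hy))
      intro i
      exact hGdiff i t ht y y' hy.1 hyy' hy'.2
    have hval : (∫ i, c * (ρ i y - ρ i y') ∂lam) = c * (y' - y) := by
      rw [integral_const_mul, integral_sub (hρ_int y hy) (hρ_int y' hy'), hmass y hy, hmass y' hy']
      ring
    rw [hval] at hlower
    linarith [hsub ▸ hlower]
  refine ⟨?_, hc0, ?_⟩
  · -- derivative bound
    intro y hy t ht
    have hd := (hasDerivAt_iff_tendsto_slope).1 (hfy t ht y hy)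
    rcases lt_or_ge y 1 with hy1 | hy1
    · have hne : 𝓝[>] y ≤ 𝓝[≠] y := nhdsWithin_mono y fun z hz => hz.ne'
      refine ge_of_tendsto (hd.mono_left hne) ?_
      filter_upwards [Ioc_mem_nhdsGT_of_mem ⟨le_refl y, hy1⟩] with z hz
      have h1 := hmain t ht y hy z ⟨hy.1.trans hz.1.le, hz.2⟩ hz.1.le
      simp only [slope_def_field]
      rw [le_div_iff₀ (sub_pos.2 hz.1)]
      linarith [h1]
    · have hyeq : y = 1 := le_antisymm hy.2 hy1
      have hy0 : 0 < y := by rw [hyeq]; exact one_pos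
      have hne : 𝓝[<] y ≤ 𝓝[≠] y := nhdsWithin_mono y fun z hz => hz.ne
      refine ge_of_tendsto (hd.mono_left hne) ?_
      filter_upwards [Ico_mem_nhdsLT_of_mem ⟨hy0, le_refl y⟩] with z hz
      have h1 := hmain t ht z ⟨hz.1, hz.2.le.trans hy.2⟩ y hy hz.2.le
      simp only [slope_def_field]
      rw [le_div_iff_of_neg (sub_neg.2 hz.2)]
      have h2 : c * (z - y) = -(c * (y - z)) := by ring
      linarith [h1, h2]
  · -- strict monotonicity
    intro t ht y hy y' hy' hlt
    have h1 := hmain t ht y hy y' hy' hlt.le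
    have h2 : 0 < c * (y' - y) := mul_pos hc0 (sub_pos.2 hlt)
    simp only
    linarith
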